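/- Let (G,𝓑,≤) be an ordered biased graph with G a complete graph. If every 1324-circuit of G is balanced, then every oscillating circuit of G is balanced. -/

import Mathlib

open SimpleGraph

namespace Paper

variable {V : Type*}

/-- The edge set of a walk, as a set of edges. -/
def walkEdges {G : SimpleGraph V} {x y : V} (p : G.Walk x y) : Set (Sym2 V) :=
  {e | e ∈ p.edges}

/-- `C` is a circuit of `G`, i.e. the edge set of a cycle of `G`. -/
def IsCircuit (G : SimpleGraph V) (C : Set (Sym2 V)) : Prop :=
  ∃ (v : V) (w : G.Walk v v), w.IsCycle ∧ C = walkEdges w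

/-- The set of vertices covered by a set of edges. -/
def circVerts (C : Set (Sym2 V)) : Set V := {v | ∃ e ∈ C, v ∈ e}

/-- An edge set is nonspanning if it misses some vertex. -/
def Nonspanning (C : Set (Sym2 V)) : Prop := circVerts C ≠ Set.univ

/-- Three pairwise edge-disjoint and internally vertex-disjoint `x`-`y` paths,
forming a theta subgraph. -/
def IsThetaConfig (G : SimpleGraph V) {x y : V} (p₁ p₂ p₃ : G.Walk x y) : Prop :=
  x ≠ y ∧ p₁.IsPath ∧ p₂.IsPath ∧ p₃.IsPath ∧
  (∀ e, e ∈ p₁.edges → e ∉ p₂.edges) ∧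
  (∀ e, e ∈ p₁.edges → e ∉ p₃.edges) ∧
  (∀ e, e ∈ p₂.edges → e ∉ p₃.edges) ∧
  (∀ v, v ∈ p₁.support → v ∈ p₂.support → v = x ∨ v = y) ∧
  (∀ v, v ∈ p₁.support → v ∈ p₃.support → v = x ∨ v = y) ∧
  (∀ v, v ∈ p₂.support → v ∈ p₃.support → v = x ∨ v = y)

/-- No theta subgraph of `G` contains exactly two circuits of `B`: the three
circuits of a theta subgraph are the unions of pairs of its three paths. -/
def ThetaProperty (G : SimpleGraph V) (B : Set (Set (Sym2 V))) : Prop :=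
  ∀ ⦃x y : V⦄ (p₁ p₂ p₃ : G.Walk x y), IsThetaConfig G p₁ p₂ p₃ →
    ¬ ((walkEdges p₁ ∪ walkEdges p₂ ∈ B ∧ walkEdges p₁ ∪ walkEdges p₃ ∈ B ∧
          walkEdges p₂ ∪ walkEdges p₃ ∉ B) ∨
       (walkEdges p₁ ∪ walkEdges p₂ ∈ B ∧ walkEdges p₁ ∪ walkEdges p₃ ∉ B ∧
          walkEdges p₂ ∪ walkEdges p₃ ∈ B) ∨
       (walkEdges p₁ ∪ walkEdges p₂ ∉ B ∧ walkEdges p₁ ∪ walkEdges p₃ ∈ B ∧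
          walkEdges p₂ ∪ walkEdges p₃ ∈ B))

/-- `(G, B)` is a biased graph. -/
def IsBiased (G : SimpleGraph V) (B : Set (Set (Sym2 V))) : Prop :=
  (∀ C ∈ B, IsCircuit G C) ∧ ThetaProperty G B

/-- The subgraph of `G` induced on the vertex set `X` (kept on the same vertex type). -/
def inducedOn (G : SimpleGraph V) (X : Set V) : SimpleGraph V where
  Adj u v := G.Adj u v ∧ u ∈ X ∧ v ∈ X
  symm := ⟨fun u v h => ⟨h.1.symm, h.2.2, h.2.1⟩⟩
  loopless := ⟨fun u h => G.loopless.1 u h.1⟩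

/-- The gain of a walk with respect to a gain function `γ` (an antisymmetric
function recording an orientation together with a group labelling). -/
def walkGain {Γ : Type*} [Group Γ] (γ : V → V → Γ) {G : SimpleGraph V}
    {x y : V} (p : G.Walk x y) : Γ :=
  (p.darts.map fun d => γ d.toProd.1 d.toProd.2).prod

/-- `(G, B)` arises from a `Γ`-labelled graph: some orientation and `Γ`-labelling of `G`
(encoded as an antisymmetric gain function) whose balanced circuits are exactly `B`. -/
def ArisesFrom (G : SimpleGraph V) (B : Set (Set (Sym2 V))) (Γ : Type*) [Group Γ] : Prop :=
  ∃ γ : V → V → Γ, (∀ u v, γ u v * γ v u = 1) ∧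
    ∀ (v : V) (w : G.Walk v v), w.IsCycle → (walkEdges w ∈ B ↔ walkGain γ w = 1)

/-- `(G, B)` arises from a `Γ`-labelled graph for some finite cyclic group `Γ`. -/
def ArisesFromFiniteCyclic (G : SimpleGraph V) (B : Set (Set (Sym2 V))) : Prop :=
  ∃ (Γ : Type) (instΓ : Group Γ), Finite Γ ∧ (letI := instΓ; IsCyclic Γ ∧ ArisesFrom G B Γ)

/-- The edge set of the cycle visiting the entries of the list `L` in cyclic order. -/
def cycEdges (L : List V) : Set (Sym2 V) :=
  {e | ∃ i : Fin L.length,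
    e = s(L.get i, L.get ⟨(i.val + 1) % L.length, Nat.mod_lt _ i.pos⟩)}

section Ordered

variable [LinearOrder V]

/-- The edge set `{v₁v₂, v₂v₃, v₃v₄, v₄v₁}` of a 4-circuit. -/
def Circ4 (v₁ v₂ v₃ v₄ : V) : Set (Sym2 V) := {s(v₁, v₂), s(v₂, v₃), s(v₃, v₄), s(v₄, v₁)}

/-- A 1324-circuit: the canonical ordering `v₁,v₂,v₃,v₄` satisfies `v₁<v₃<v₂<v₄`. -/
def Is1324 (C : Set (Sym2 V)) : Prop :=
  ∃ v₁ v₂ v₃ v₄ : V, v₁ < v₃ ∧ v₃ < v₂ ∧ v₂ < v₄ ∧ C = Circ4 v₁ v₂ v₃ v₄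

/-- A 1243-circuit: the canonical ordering `v₁,v₂,v₃,v₄` satisfies `v₁<v₂<v₄<v₃`. -/
def Is1243 (C : Set (Sym2 V)) : Prop :=
  ∃ v₁ v₂ v₃ v₄ : V, v₁ < v₂ ∧ v₂ < v₄ ∧ v₄ < v₃ ∧ C = Circ4 v₁ v₂ v₃ v₄

/-- A circuit is oscillating if every vertex is either below both of its neighbours
in the circuit or above both of them. -/
def Oscillating (C : Set (Sym2 V)) : Prop :=
  ∀ ⦃v a b : V⦄, s(v, a) ∈ C → s(v, b) ∈ C → a ≠ b → (v < a ∧ v < b) ∨ (a < v ∧ b < v)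

/-- The number of increasing steps of a walk minus the number of decreasing steps;
for a cycle walk `w` this is `δ₀` of the corresponding circuit, and `(walkDelta w).natAbs`
is the parameter `δ`. -/
def walkDelta {G : SimpleGraph V} {x y : V} (p : G.Walk x y) : ℤ :=
  ((p.darts.filter fun d => d.toProd.1 < d.toProd.2).length : ℤ) -
  ((p.darts.filter fun d => d.toProd.2 < d.toProd.1).length : ℤ)

/-- The gain of a walk with respect to the edge labelling `γ` and the orientation of
the complete graph in which each edge is oriented from its smaller end to its larger end. -/
def upGain {Γ : Type*} [Group Γ] (γ : Sym2 V → Γ) {G : SimpleGraph V}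
    {x y : V} (p : G.Walk x y) : Γ :=
  (p.darts.map fun d =>
    if d.toProd.1 < d.toProd.2 then γ s(d.toProd.1, d.toProd.2)
    else (γ s(d.toProd.1, d.toProd.2))⁻¹).prod

/-- `T` is the edge set of a theta subgraph of `G`. -/
def IsTheta (G : SimpleGraph V) (T : Set (Sym2 V)) : Prop :=
  ∃ (x y : V) (p₁ p₂ p₃ : G.Walk x y), IsThetaConfig G p₁ p₂ p₃ ∧
    T = walkEdges p₁ ∪ walkEdges p₂ ∪ walkEdges p₃

/-- Adjacency in the graph `Ω(G)`: a theta subgraph contains both circuits together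
with a 1243- or 1324-circuit. -/
def OmegaAdj (G : SimpleGraph V) (C₁ C₂ : Set (Sym2 V)) : Prop :=
  C₁ ≠ C₂ ∧ ∃ T, IsTheta G T ∧ C₁ ⊆ T ∧ C₂ ⊆ T ∧ ∃ D, (Is1243 D ∨ Is1324 D) ∧ D ⊆ T

/-- The graph `Ω(G)` on the nonspanning circuits of `G`. -/
def Omega (G : SimpleGraph V) :
    SimpleGraph {C : Set (Sym2 V) // IsCircuit G C ∧ Nonspanning C} where
  Adj C₁ C₂ := OmegaAdj G C₁.1 C₂.1
  symm := by
    constructor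
    rintro C₁ C₂ ⟨hne, T, hT, h1, h2, hD⟩
    exact ⟨hne.symm, T, hT, h2, h1, hD⟩
  loopless := by
    constructor
    rintro C ⟨hne, -⟩
    exact hne rfl

/-- Two circuits are similar if the order-preserving bijection between their vertex
sets carries one to the other. -/
def Similar (C₁ C₂ : Set (Sym2 V)) : Prop :=
  ∃ φ : V → V, Set.BijOn φ (circVerts C₁) (circVerts C₂) ∧
    StrictMonoOn φ (circVerts C₁) ∧ C₂ = Sym2.map φ '' C₁

end Ordered

/-- The 4-uniform Ramsey property for `N` with target sizes `a, b, c, d`. -/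
def HasRamsey4 (N a b c d : ℕ) : Prop :=
  ∀ χ : Finset (Fin N) → Fin 4, ∃ (i : Fin 4) (X : Finset (Fin N)),
    X.card = ![a, b, c, d] i ∧ ∀ Q ⊆ X, Q.card = 4 → χ Q = i

/-- The 4-colour Ramsey number for 4-uniform hypergraphs. -/
noncomputable def R4 (a b c d : ℕ) : ℕ := sInf {N | HasRamsey4 N a b c d}

end Paper


namespace Paper

section Aux

variable {V : Type} [LinearOrder V]

lemma mem_support_of_mem_walk_edge {G : SimpleGraph V} {u v : V} (p : G.Walk u v)
    {e : Sym2 V} {x : V} (he : e ∈ p.edges) (hx : x ∈ e) : x ∈ p.support := by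
  induction e using Sym2.ind with
  | _ a b =>
    rcases Sym2.mem_iff.mp hx with rfl | rfl
    · exact p.fst_mem_support_of_mem_edges he
    · exact p.snd_mem_support_of_mem_edges he

lemma circ4_rev (v₁ v₂ v₃ v₄ : V) : Circ4 v₁ v₂ v₃ v₄ = Circ4 v₁ v₄ v₃ v₂ := by
  ext e
  simp only [Circ4, Set.mem_insert_iff, Set.mem_singleton_iff]
  constructor
  · rintro (h | h | h | h) <;> rw [h, Sym2.eq_swap] <;> tauto
  · rintro (h | h | h | h) <;> rw [h, Sym2.eq_swap] <;> tauto

lemma is1324_of {v₁ v₂ v₃ v₄ : V} (h13 : v₁ < v₃) (h32 : v₃ < v₂) (h34 : v₃ < v₄)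
    (h24 : v₂ ≠ v₄) : Is1324 (Circ4 v₁ v₂ v₃ v₄) := by
  rcases h24.lt_or_gt with h | h
  · exact ⟨v₁, v₂, v₃, v₄, h13, h32, h, rfl⟩
  · exact ⟨v₁, v₄, v₃, v₂, h13, h34, h, circ4_rev v₁ v₂ v₃ v₄⟩

set_option maxHeartbeats 2000000 in
lemma aux_main (B : Set (Set (Sym2 V))) (hB : IsBiased (completeGraph V) B)
    (h1324 : ∀ C : Set (Sym2 V), Is1324 C → C ∈ B) :
    ∀ (n : ℕ) (v₁ : V) (w : (completeGraph V).Walk v₁ v₁), w.length ≤ n → w.IsCycle →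
      (∀ x ∈ circVerts (walkEdges w), v₁ ≤ x) → Oscillating (walkEdges w) →
      walkEdges w ∈ B := by
  intro n
  induction n with
  | zero =>
    intro v₁ w hlen hcyc _ _
    have := hcyc.three_le_length
    omega
  | succ n IH =>
    intro v₁ w hlen hcyc hmin hosc
    cases w with
    | nil =>
      have := hcyc.three_le_length
      simp at this
    | @cons _ v₂ _ h₁ p₁ =>
      cases p₁ with
      | nil =>
        have := hcyc.three_le_length
        simp [SimpleGraph.Walk.length_cons] at this
      | @cons _ v₃ _ h₂ p₂ =>
        cases p₂ with
        | nil =>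
          have := hcyc.three_le_length
          simp [SimpleGraph.Walk.length_cons] at this
        | @cons _ v₄ _ h₃ w' =>
          -- w = v₁ - v₂ - v₃ - v₄ - (w' : Walk v₄ v₁)
          have hC : ∀ e, e ∈ walkEdges (Walk.cons h₁ (Walk.cons h₂ (Walk.cons h₃ w'))) ↔
              (e = s(v₁, v₂) ∨ e = s(v₂, v₃) ∨ e = s(v₃, v₄) ∨ e ∈ w'.edges) := by
            intro e
            simp [walkEdges, SimpleGraph.Walk.edges_cons]
          set C := walkEdges (Walk.cons h₁ (Walk.cons h₂ (Walk.cons h₃ w'))) with hCdef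
          have he1 : s(v₁, v₂) ∈ C := (hC _).mpr (Or.inl rfl)
          have he2 : s(v₂, v₃) ∈ C := (hC _).mpr (Or.inr (Or.inl rfl))
          have he3 : s(v₃, v₄) ∈ C := (hC _).mpr (Or.inr (Or.inr (Or.inl rfl)))
          have hpath : (Walk.cons h₂ (Walk.cons h₃ w')).IsPath ∧
              s(v₁, v₂) ∉ (Walk.cons h₂ (Walk.cons h₃ w')).edges :=
            (SimpleGraph.Walk.cons_isCycle_iff _ _).mp hcyc
          have hpw' : w'.IsPath := hpath.1.of_cons.of_cons
          have hsup : (v₂ :: v₃ :: w'.support).Nodup := by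
            have := hpath.1.2
            simpa [SimpleGraph.Walk.support_cons] using this
          have hv23 : v₂ ≠ v₃ := by
            intro h; exact (List.nodup_cons.mp hsup).1 (by simp [h])
          have hv2w' : v₂ ∉ w'.support := by
            intro h; exact (List.nodup_cons.mp hsup).1 (by simp [h])
          have hv3w' : v₃ ∉ w'.support := by
            have := (List.nodup_cons.mp hsup).2
            exact (List.nodup_cons.mp this).1
          have hv1w' : v₁ ∈ w'.support := w'.end_mem_support
          have hv21 : v₂ ≠ v₁ := fun h => hv2w' (h ▸ hv1w')
          have hv31 : v₃ ≠ v₁ := fun h => hv3w' (h ▸ hv1w')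
          have hv12lt : v₁ < v₂ :=
            lt_of_le_of_ne (hmin v₂ ⟨s(v₁, v₂), he1, by simp⟩) (Ne.symm hv21)
          have hv13lt : v₁ < v₃ :=
            lt_of_le_of_ne (hmin v₃ ⟨s(v₂, v₃), he2, by simp⟩) (Ne.symm hv31)
          have h32 : v₃ < v₂ := by
            have h21 : s(v₂, v₁) ∈ C := by rw [Sym2.eq_swap]; exact he1
            rcases hosc h21 he2 (Ne.symm hv31) with ⟨h, _⟩ | ⟨_, h⟩
            · exact absurd hv12lt (not_lt.mpr h.le)
            · exact h
          have hv24 : v₂ ≠ v₄ := by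
            intro h
            exact hv2w' (h ▸ w'.start_mem_support)
          have hv34 : v₃ ≠ v₄ := h₃.ne
          have h34 : v₃ < v₄ := by
            have h32s : s(v₃, v₂) ∈ C := by rw [Sym2.eq_swap]; exact he2
            rcases hosc h32s he3 hv24 with ⟨_, h⟩ | ⟨h, _⟩
            · exact h
            · exact absurd h32 (not_lt.mpr h.le)
          cases w' with
          | nil =>
            -- triangle v₁ v₂ v₃ : contradiction with oscillation
            exfalso
            have he3t : s(v₃, v₁) ∈ C := he3
            have h23 : s(v₃, v₂) ∈ C := by rw [Sym2.eq_swap]; exact he2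
            rcases hosc h23 he3t hv21 with ⟨_, h⟩ | ⟨h, _⟩
            · exact absurd hv13lt (not_lt.mpr h.le)
            · exact absurd h32 (not_lt.mpr h.le)
          | @cons _ v₅ _ h₄ wB =>
            have hv14 : v₄ ≠ v₁ := by
              intro h
              have hnd := hpw'.2
              rw [SimpleGraph.Walk.support_cons] at hnd
              exact (List.nodup_cons.mp hnd).1 (h ▸ wB.end_mem_support)
            have hv14lt : v₁ < v₄ :=
              lt_of_le_of_ne (hmin v₄ ⟨s(v₃, v₄), he3, by simp⟩) (Ne.symm hv14)
            cases wB with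
            | nil =>
              -- 4-cycle : C = Circ4 v₁ v₂ v₃ v₄, a 1324-circuit
              have hCset : C = Circ4 v₁ v₂ v₃ v₄ := by
                ext e
                rw [hCdef]
                simp only [walkEdges, SimpleGraph.Walk.edges_cons, SimpleGraph.Walk.edges_nil,
                  Set.mem_setOf_eq, List.mem_cons, List.not_mem_nil, or_false,
                  Circ4, Set.mem_insert_iff, Set.mem_singleton_iff]
              rw [hCset]
              exact h1324 _ (is1324_of hv13lt h32 h34 hv24)
            | @cons _ v₆ _ h₅ wC =>
              -- general case
              set w2s : (completeGraph V).Walk v₄ v₁ := Walk.cons h₄ (Walk.cons h₅ wC)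
                with hw2sdef
              have hv51 : v₅ ≠ v₁ := by
                have hnd := hpw'.2
                rw [SimpleGraph.Walk.support_cons, SimpleGraph.Walk.support_cons] at hnd
                intro h
                exact (List.nodup_cons.mp (List.nodup_cons.mp hnd).2).1 (h ▸ wC.end_mem_support)
              have hv4wB : v₄ ∉ (Walk.cons h₅ wC).support := by
                have hnd := hpw'.2
                rw [SimpleGraph.Walk.support_cons] at hnd
                exact (List.nodup_cons.mp hnd).1
              have hedge14 : s(v₁, v₄) ∉ w2s.edges := by
                rw [hw2sdef, SimpleGraph.Walk.edges_cons]
                intro h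
                rcases List.mem_cons.mp h with h | h
                · rcases Sym2.eq_iff.mp h with ⟨h1, _⟩ | ⟨h1, _⟩
                  · exact hv14 h1.symm
                  · exact hv51 h1.symm
                · exact hv4wB ((Walk.cons h₅ wC).snd_mem_support_of_mem_edges h)
              have h14adj : (completeGraph V).Adj v₁ v₄ := by
                rw [completeGraph_eq_top, SimpleGraph.top_adj]
                exact Ne.symm hv14
              -- edge-nodup facts
              have htr : (Walk.cons h₁ (Walk.cons h₂ (Walk.cons h₃ w2s))).edges.Nodup :=
                hcyc.isCircuit.isTrail.edges_nodup
              rw [SimpleGraph.Walk.edges_cons, SimpleGraph.Walk.edges_cons,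
                SimpleGraph.Walk.edges_cons] at htr
              have hnd1 := List.nodup_cons.mp htr
              have hnd2 := List.nodup_cons.mp hnd1.2
              have hnd3 := List.nodup_cons.mp hnd2.2
              have he1w : s(v₁, v₂) ∉ w2s.edges := fun h => hnd1.1 (by simp [h])
              have he2w : s(v₂, v₃) ∉ w2s.edges := fun h => hnd2.1 (by simp [h])
              have he3w : s(v₃, v₄) ∉ w2s.edges := hnd3.1
              -- the theta paths
              obtain ⟨p1, hp1def⟩ : ∃ p : (completeGraph V).Walk v₁ v₄,
                  p = Walk.cons h14adj Walk.nil := ⟨_, rfl⟩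
              obtain ⟨pq, hpqdef⟩ : ∃ p : (completeGraph V).Walk v₁ v₄,
                  p = Walk.cons h₁ (Walk.cons h₂ (Walk.cons h₃ Walk.nil)) := ⟨_, rfl⟩
              obtain ⟨p3, hp3def⟩ : ∃ p : (completeGraph V).Walk v₁ v₄,
                  p = w2s.reverse := ⟨_, rfl⟩
              have hp1edges : p1.edges = [s(v₁, v₄)] := by
                rw [hp1def, SimpleGraph.Walk.edges_cons, SimpleGraph.Walk.edges_nil]
              have hpqedges : pq.edges = [s(v₁, v₂), s(v₂, v₃), s(v₃, v₄)] := by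
                rw [hpqdef]; simp [SimpleGraph.Walk.edges_cons]
              have hp3edges : ∀ e, e ∈ p3.edges ↔ e ∈ w2s.edges := by
                intro e
                rw [hp3def, SimpleGraph.Walk.edges_reverse, List.mem_reverse]
              have hp3support : ∀ x, x ∈ p3.support ↔ x ∈ w2s.support := by
                intro x
                rw [hp3def, SimpleGraph.Walk.support_reverse, List.mem_reverse]
              have hne1412 : s(v₁, v₄) ≠ s(v₁, v₂) := by
                intro heq
                rcases Sym2.eq_iff.mp heq with (⟨-, h⟩ | ⟨h, -⟩)
                · exact hv24 h.symm
                · exact hv21 h.symm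
              have hne1423 : s(v₁, v₄) ≠ s(v₂, v₃) := by
                intro heq
                rcases Sym2.eq_iff.mp heq with (⟨h, -⟩ | ⟨h, -⟩)
                · exact hv21 h.symm
                · exact hv31 h.symm
              have hne1434 : s(v₁, v₄) ≠ s(v₃, v₄) := by
                intro heq
                rcases Sym2.eq_iff.mp heq with (⟨h, -⟩ | ⟨-, h⟩)
                · exact hv31 h.symm
                · exact hv34 h.symm
              have hthetaconfig : IsThetaConfig (completeGraph V) p1 pq p3 := by
                refine ⟨Ne.symm hv14, ?_, ?_, ?_, ?_, ?_, ?_, ?_, ?_, ?_⟩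
                · rw [hp1def]
                  refine SimpleGraph.Walk.IsPath.nil.cons ?_
                  simp [Ne.symm hv14]
                · rw [hpqdef, SimpleGraph.Walk.isPath_def]
                  simp only [SimpleGraph.Walk.support_cons, SimpleGraph.Walk.support_nil]
                  simp [hv21.symm, hv31.symm, Ne.symm hv14, hv23, hv24, hv34, hv21, hv31]
                · rw [hp3def]; exact hpw'.reverse
                · intro e he
                  rw [hp1edges] at he
                  simp only [List.mem_singleton] at he
                  subst he
                  rw [hpqedges]
                  simp [hne1412, hne1423, hne1434]
                · intro e he
                  rw [hp1edges] at he
                  simp only [List.mem_singleton] at he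
                  subst he
                  rw [hp3edges]
                  exact hedge14
                · intro e he hcon
                  rw [hpqedges] at he
                  rw [hp3edges] at hcon
                  rcases List.mem_cons.mp he with rfl | he
                  · exact he1w hcon
                  rcases List.mem_cons.mp he with rfl | he
                  · exact he2w hcon
                  rcases List.mem_cons.mp he with rfl | he
                  · exact he3w hcon
                  · simp at he
                · intro x hx _
                  rw [hp1def] at hx
                  simp only [SimpleGraph.Walk.support_cons, SimpleGraph.Walk.support_nil,
                    List.mem_cons, List.mem_singleton, List.not_mem_nil, or_false] at hx
                  tauto
                · intro x hx _
                  rw [hp1def] at hx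
                  simp only [SimpleGraph.Walk.support_cons, SimpleGraph.Walk.support_nil,
                    List.mem_cons, List.mem_singleton, List.not_mem_nil, or_false] at hx
                  tauto
                · intro x hx hx3
                  rw [hpqdef] at hx
                  simp only [SimpleGraph.Walk.support_cons, SimpleGraph.Walk.support_nil,
                    List.mem_cons, List.mem_singleton, List.not_mem_nil, or_false] at hx
                  rw [hp3support] at hx3
                  rcases hx with rfl | rfl | rfl | rfl
                  · exact Or.inl rfl
                  · exact absurd hx3 hv2w'
                  · exact absurd hx3 hv3w'
                  · exact Or.inr rfl
              -- the 4-circuit p1 ∪ pq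
              have hunion12 : walkEdges p1 ∪ walkEdges pq = Circ4 v₁ v₂ v₃ v₄ := by
                ext e
                simp only [walkEdges, Set.mem_union, Set.mem_setOf_eq, hp1edges, hpqedges,
                  List.mem_singleton, List.mem_cons, List.not_mem_nil, or_false,
                  Circ4, Set.mem_insert_iff, Set.mem_singleton_iff]
                constructor
                · rintro (h | h | h | h)
                  · rw [h, Sym2.eq_swap]; tauto
                  · tauto
                  · tauto
                  · tauto
                · rintro (h | h | h | h)
                  · tauto
                  · tauto
                  · tauto
                  · rw [h, Sym2.eq_swap]; tauto
              have hmem12 : walkEdges p1 ∪ walkEdges pq ∈ B := by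
                rw [hunion12]
                exact h1324 _ (is1324_of hv13lt h32 h34 hv24)
              -- the smaller oscillating cycle p1 ∪ p3
              obtain ⟨w2, hw2def⟩ : ∃ p : (completeGraph V).Walk v₁ v₁,
                  p = Walk.cons h14adj w2s := ⟨_, rfl⟩
              have hw2cyc : w2.IsCycle := by
                rw [hw2def]
                exact (SimpleGraph.Walk.cons_isCycle_iff _ _).mpr ⟨hpw', hedge14⟩
              have hw2edges : ∀ e, e ∈ walkEdges w2 ↔ e = s(v₁, v₄) ∨ e ∈ w2s.edges := by
                intro e
                rw [hw2def]
                simp [walkEdges, SimpleGraph.Walk.edges_cons]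
              have hwsubC : ∀ e, e ∈ w2s.edges → e ∈ C := by
                intro e he
                exact (hC e).mpr (Or.inr (Or.inr (Or.inr he)))
              have hmin2 : ∀ x ∈ circVerts (walkEdges w2), v₁ ≤ x := by
                rintro x ⟨e, he, hx⟩
                rcases (hw2edges e).mp he with rfl | hmem
                · rcases Sym2.mem_iff.mp hx with rfl | rfl
                  · exact le_refl _
                  · exact hv14lt.le
                · exact hmin x ⟨e, hwsubC e hmem, hx⟩
              have hosc2 : Oscillating (walkEdges w2) := by
                intro x a b ha hb hab
                have key : ∀ c : V, s(x, c) = s(v₁, v₄) ∨ s(x, c) ∈ w2s.edges →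
                    (x = v₁ ∧ c = v₄) ∨ (x = v₄ ∧ c = v₁) ∨ s(x, c) ∈ C := by
                  intro c hc
                  rcases hc with hc | hc
                  · rcases Sym2.eq_iff.mp hc with ⟨h1, h2⟩ | ⟨h1, h2⟩
                    · exact Or.inl ⟨h1, h2⟩
                    · exact Or.inr (Or.inl ⟨h1, h2⟩)
                  · exact Or.inr (Or.inr (hwsubC _ hc))
                have hb4 : ∀ c : V, s(v₄, c) ∈ C → c ≠ v₁ → c < v₄ := by
                  intro c hc hc1
                  by_cases h : c = v₃
                  · exact h ▸ h34
                  · have h43 : s(v₄, v₃) ∈ C := by rw [Sym2.eq_swap]; exact he3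
                    rcases hosc h43 hc (fun hh => h hh.symm) with ⟨hq, _⟩ | ⟨_, hq⟩
                    · exact absurd h34 (not_lt.mpr hq.le)
                    · exact hq
                have hmin1 : ∀ c : V, s(v₁, c) ∈ C → v₁ < c := by
                  intro c hc
                  have hadj : (completeGraph V).Adj v₁ c :=
                    SimpleGraph.Walk.adj_of_mem_edges _ hc
                  exact lt_of_le_of_ne (hmin c ⟨s(v₁, c), hc, by simp⟩) hadj.ne
                rcases key a ((hw2edges _).mp ha) with ⟨rfl, rfl⟩ | ⟨rfl, rfl⟩ | haC
                · -- x = v₁, a = v₄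
                  rcases key b ((hw2edges _).mp hb) with ⟨-, rfl⟩ | ⟨h1, -⟩ | hbC
                  · exact absurd rfl hab
                  · exact absurd h1.symm hv14
                  · exact Or.inl ⟨hv14lt, hmin1 b hbC⟩
                · -- x = v₄, a = v₁
                  rcases key b ((hw2edges _).mp hb) with ⟨h1, -⟩ | ⟨-, rfl⟩ | hbC
                  · exact absurd h1 hv14
                  · exact absurd rfl hab
                  · exact Or.inr ⟨hv14lt, hb4 b hbC hab.symm⟩
                · rcases key b ((hw2edges _).mp hb) with ⟨rfl, rfl⟩ | ⟨rfl, rfl⟩ | hbC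
                  · exact Or.inl ⟨hmin1 a haC, hv14lt⟩
                  · exact Or.inr ⟨hb4 a haC hab, hv14lt⟩
                  · exact hosc haC hbC hab
              have hlen2 : w2.length ≤ n := by
                have hl : (Walk.cons h₁ (Walk.cons h₂ (Walk.cons h₃ w2s))).length =
                    w2s.length + 3 := by
                  simp [SimpleGraph.Walk.length_cons]
                have hl2 : w2.length = w2s.length + 1 := by
                  rw [hw2def, SimpleGraph.Walk.length_cons]
                omega
              have hmem13w : walkEdges w2 ∈ B := IH v₁ w2 hlen2 hw2cyc hmin2 hosc2
              have hunion13 : walkEdges p1 ∪ walkEdges p3 = walkEdges w2 := by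
                ext e
                simp only [walkEdges, Set.mem_union, Set.mem_setOf_eq, hp1edges,
                  List.mem_singleton]
                rw [hp3edges e]
                rw [hw2def]
                simp [walkEdges, SimpleGraph.Walk.edges_cons]
              have hmem13 : walkEdges p1 ∪ walkEdges p3 ∈ B := by
                rw [hunion13]; exact hmem13w
              have hunion23 : walkEdges pq ∪ walkEdges p3 = C := by
                ext e
                simp only [walkEdges, Set.mem_union, Set.mem_setOf_eq, hpqedges, List.mem_cons,
                  List.not_mem_nil, or_false, List.mem_singleton]
                rw [hp3edges e, hC e]
                tauto
              by_contra hCnot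
              exact hB.2 p1 pq p3 hthetaconfig
                (Or.inl ⟨hmem12, hmem13, by rw [hunion23]; exact hCnot⟩)

end Aux

end Paper

namespace Paper

/-- in an ordered biased graph on a complete graph, if every 1324-circuit
is balanced then every oscillating circuit is balanced. -/
theorem statement16 {V : Type} [LinearOrder V] (B : Set (Set (Sym2 V)))
    (hB : IsBiased (completeGraph V) B)
    (h1324 : ∀ C : Set (Sym2 V), Is1324 C → C ∈ B) :
    ∀ C, IsCircuit (completeGraph V) C → Oscillating C → C ∈ B := by
  intro C hcirc hoscC
  obtain ⟨v, w0, hcyc, rfl⟩ := hcirc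
  have hne : w0.support.toFinset.Nonempty :=
    ⟨v, List.mem_toFinset.mpr w0.start_mem_support⟩
  obtain ⟨u, hu, humin⟩ := Finset.exists_min_image w0.support.toFinset id hne
  have hu' : u ∈ w0.support := List.mem_toFinset.mp hu
  set w := w0.rotate u hu' with hwdef
  have hedges : walkEdges w = walkEdges w0 :=
    Set.ext fun e => (SimpleGraph.Walk.rotate_edges w0 u hu').mem_iff
  have hmin : ∀ x ∈ circVerts (walkEdges w), u ≤ x := by
    rintro x ⟨e, he, hx⟩
    rw [hedges] at he
    have hxs : x ∈ w0.support := mem_support_of_mem_walk_edge w0 he hx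
    exact humin x (List.mem_toFinset.mpr hxs)
  have := aux_main B hB h1324 w.length u w le_rfl (hcyc.rotate hu') hmin
    (by rw [hedges]; exact hoscC)
  rwa [hedges] at this

end Paper
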